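/- For i = 1,…,n let N_i ~ N(m_i, σ_i²) with |m_i| ≤ 1/3, ε_i Bernoulli(α_i), Y a ℤ-valued random variable, all independent, and let Q_i be the law of N_i + ε_i Y. With the rounding kernel K(x,A) = 1_A(x - [x]) applied coordinatewise, ‖⊗_{i=1}^n K(Q_i) - ⊗_{i=1}^n law(N_i)‖_TV ≤ √(2 Σ_{i=1}^n [(6/σ_i)φ(1/(6σ_i)) + 4Φ(-1/(6σ_i))]). -/

import Mathlib

open MeasureTheory ProbabilityTheory

/-- Total variation distance `‖P - Q‖_TV = sup_A |P(A) - Q(A)|`. -/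
noncomputable def tvDist {α : Type*} [MeasurableSpace α] (P Q : Measure α) : ℝ :=
  ⨆ A : {A : Set α // MeasurableSet A}, |(P A.1).toReal - (Q A.1).toReal|

/-- Standard normal density. -/
noncomputable def stdNormalPDF (t : ℝ) : ℝ :=
  (Real.sqrt (2 * Real.pi))⁻¹ * Real.exp (-t ^ 2 / 2)

/-- Standard normal cumulative distribution function. -/
noncomputable def stdNormalCDF (t : ℝ) : ℝ := ∫ u in Set.Iic t, stdNormalPDF u

section Aux

open Set

lemma stdNormalPDF_nonneg (t : ℝ) : 0 ≤ stdNormalPDF t :=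
  mul_nonneg (inv_nonneg.2 (Real.sqrt_nonneg _)) (Real.exp_pos _).le

lemma gaussianPDFReal_zero_one (x : ℝ) : gaussianPDFReal 0 1 x = stdNormalPDF x := by
  simp [gaussianPDFReal, stdNormalPDF]

lemma integrable_stdNormalPDF : Integrable stdNormalPDF :=
  (integrable_gaussianPDFReal 0 1).congr
    (Filter.Eventually.of_forall fun x => gaussianPDFReal_zero_one x)

lemma stdNormalCDF_nonneg (t : ℝ) : 0 ≤ stdNormalCDF t :=
  setIntegral_nonneg measurableSet_Iic fun x _ => stdNormalPDF_nonneg x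

lemma stdNormalCDF_mono : Monotone stdNormalCDF := by
  intro s t hst
  refine setIntegral_mono_set integrable_stdNormalPDF.integrableOn
    (Filter.Eventually.of_forall fun x => stdNormalPDF_nonneg x) ?_
  exact HasSubset.Subset.eventuallyLE (Set.Iic_subset_Iic.2 hst)

lemma gaussianReal_zero_one_Iic (t : ℝ) :
    gaussianReal 0 1 (Set.Iic t) = ENNReal.ofReal (stdNormalCDF t) := by
  rw [gaussianReal_apply_eq_integral 0 one_ne_zero]
  unfold stdNormalCDF
  congr 1
  exact setIntegral_congr_fun measurableSet_Iic fun x _ => gaussianPDFReal_zero_one x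

lemma map_affine (c m : ℝ) :
    (gaussianReal 0 1).map (fun x => c * x + m)
      = gaussianReal m ⟨c ^ 2, sq_nonneg c⟩ := by
  have h1 : (fun x : ℝ => c * x + m) = (fun y => y + m) ∘ (fun x => c * x) := rfl
  rw [h1, ← Measure.map_map (measurable_id'.add_const m) (measurable_id'.const_mul c)]
  have h2 : Measure.map (fun x : ℝ => c * x) (gaussianReal 0 1)
      = gaussianReal 0 ⟨c ^ 2, sq_nonneg c⟩ := by
    rw [gaussianReal_map_const_mul]; congr 1 <;> [simp; exact NNReal.eq (by simp; rfl)]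
  rw [h2]
  simpa using gaussianReal_map_add_const (μ := 0) (v := ⟨c ^ 2, sq_nonneg c⟩) m

lemma gauss_Iic (m σ : ℝ) (hσ : 0 < σ) (s : ℝ) :
    gaussianReal m ⟨σ ^ 2, sq_nonneg σ⟩ (Set.Iic s)
      = ENNReal.ofReal (stdNormalCDF ((s - m) / σ)) := by
  rw [← map_affine σ m,
    Measure.map_apply ((measurable_id'.const_mul σ).add_const m) measurableSet_Iic]
  have hpre : (fun x : ℝ => σ * x + m) ⁻¹' Set.Iic s = Set.Iic ((s - m) / σ) := by
    ext x
    simp only [Set.mem_preimage, Set.mem_Iic, le_div_iff₀ hσ]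
    constructor <;> intro h <;> nlinarith
  rw [hpre, gaussianReal_zero_one_Iic]

lemma gauss_Ici (m σ : ℝ) (hσ : 0 < σ) (s : ℝ) :
    gaussianReal m ⟨σ ^ 2, sq_nonneg σ⟩ (Set.Ici s)
      = ENNReal.ofReal (stdNormalCDF ((m - s) / σ)) := by
  have hvar : (⟨(-σ) ^ 2, sq_nonneg (-σ)⟩ : NNReal) = ⟨σ ^ 2, sq_nonneg σ⟩ :=
    Subtype.ext (by ring)
  have hmap : (gaussianReal 0 1).map (fun x => -σ * x + m)
      = gaussianReal m ⟨σ ^ 2, sq_nonneg σ⟩ := by rw [map_affine, hvar]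
  rw [← hmap,
    Measure.map_apply ((measurable_id'.const_mul (-σ)).add_const m) measurableSet_Ici]
  have hpre : (fun x : ℝ => -σ * x + m) ⁻¹' Set.Ici s = Set.Iic ((m - s) / σ) := by
    ext x
    simp only [Set.mem_preimage, Set.mem_Ici, Set.mem_Iic, le_div_iff₀ hσ]
    constructor <;> intro h <;> nlinarith
  rw [hpre, gaussianReal_zero_one_Iic]

lemma gauss_tail (m σ : ℝ) (hσ : 0 < σ) (hm : |m| ≤ 1 / 3) :
    gaussianReal m ⟨σ ^ 2, sq_nonneg σ⟩ (Set.Ico (-(1/2) : ℝ) (1/2))ᶜ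
      ≤ ENNReal.ofReal (2 * stdNormalCDF (-1 / (6 * σ))) := by
  have habs := abs_le.1 hm
  have hσ' : (0 : ℝ) < σ := hσ
  have hcompl : (Set.Ico (-(1/2) : ℝ) (1/2))ᶜ = Set.Iio (-(1/2)) ∪ Set.Ici (1/2) := by
    rw [← Set.Ici_inter_Iio, Set.compl_inter, Set.compl_Ici, Set.compl_Iio]
  have harg : (-1 : ℝ) / (6 * σ) = (-(1/6)) / σ := by
    field_simp
  have h1 : gaussianReal m ⟨σ ^ 2, sq_nonneg σ⟩ (Set.Iio (-(1/2) : ℝ))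
      ≤ ENNReal.ofReal (stdNormalCDF (-1 / (6 * σ))) := by
    refine (measure_mono Set.Iio_subset_Iic_self).trans ?_
    rw [gauss_Iic m σ hσ]
    refine ENNReal.ofReal_le_ofReal (stdNormalCDF_mono ?_)
    rw [harg]
    exact div_le_div_of_nonneg_right (by linarith) hσ.le
  have h2 : gaussianReal m ⟨σ ^ 2, sq_nonneg σ⟩ (Set.Ici (1/2 : ℝ))
      ≤ ENNReal.ofReal (stdNormalCDF (-1 / (6 * σ))) := by
    rw [gauss_Ici m σ hσ]
    refine ENNReal.ofReal_le_ofReal (stdNormalCDF_mono ?_)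
    rw [harg]
    exact div_le_div_of_nonneg_right (by linarith) hσ.le
  calc gaussianReal m ⟨σ ^ 2, sq_nonneg σ⟩ (Set.Ico (-(1/2) : ℝ) (1/2))ᶜ
      ≤ gaussianReal m ⟨σ ^ 2, sq_nonneg σ⟩ (Set.Iio (-(1/2) : ℝ))
        + gaussianReal m ⟨σ ^ 2, sq_nonneg σ⟩ (Set.Ici (1/2 : ℝ)) := by
        rw [hcompl]; exact measure_union_le _ _
    _ ≤ ENNReal.ofReal (stdNormalCDF (-1 / (6 * σ)))
        + ENNReal.ofReal (stdNormalCDF (-1 / (6 * σ))) := add_le_add h1 h2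
    _ = ENNReal.ofReal (2 * stdNormalCDF (-1 / (6 * σ))) := by
        rw [← ENNReal.ofReal_add (stdNormalCDF_nonneg _) (stdNormalCDF_nonneg _), two_mul]

lemma measurable_gfrac : Measurable (fun x : ℝ => x - (round x : ℝ)) := by
  have h1 : Measurable (round : ℝ → ℤ) := by
    rw [show (round : ℝ → ℤ) = fun x : ℝ => ⌊x + 1/2⌋ from funext round_eq]
    exact Int.measurable_floor.comp (measurable_id.add_const _)
  exact measurable_id.sub (measurable_from_top.comp h1)

lemma gfrac_int_add (x : ℝ) (k : ℤ) :
    x + (k : ℝ) - (round (x + (k : ℝ)) : ℝ) = x - (round x : ℝ) := by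
  rw [round_add_intCast]
  push_cast
  ring

/-- The rounding kernel erases the integer-valued perturbation. -/
lemma map_gfrac_eq (m : ℝ) (v : NNReal) (a : ℝ) (ha : a ∈ Set.Icc (0 : ℝ) 1)
    (νZ : Measure ℤ) [IsProbabilityMeasure νZ] :
    Measure.map (fun x : ℝ => x - (round x : ℝ))
        (ENNReal.ofReal (1 - a) • gaussianReal m v +
          ENNReal.ofReal a •
            ((gaussianReal m v).conv (Measure.map (fun k : ℤ => (k : ℝ)) νZ)))
      = Measure.map (fun x : ℝ => x - (round x : ℝ)) (gaussianReal m v) := by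
  set g : ℝ → ℝ := fun x => x - (round x : ℝ) with hgdef
  have hg : Measurable g := measurable_gfrac
  set ν : Measure ℝ := Measure.map (fun k : ℤ => (k : ℝ)) νZ with hν
  have hcast : Measurable (fun k : ℤ => (k : ℝ)) := measurable_from_top
  haveI : IsProbabilityMeasure ν := Measure.isProbabilityMeasure_map hcast.aemeasurable
  have hkey : Measure.map g ((gaussianReal m v).conv ν) = Measure.map g (gaussianReal m v) := by
    rw [Measure.conv, Measure.map_map hg measurable_add]
    have hnull : (gaussianReal m v).prod ν
        {p : ℝ × ℝ | p.2 ∉ Set.range (fun k : ℤ => (k : ℝ))} = 0 := by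
      have hS : MeasurableSet (Set.range (fun k : ℤ => (k : ℝ))) :=
        (Set.countable_range _).measurableSet
      have heq : {p : ℝ × ℝ | p.2 ∉ Set.range (fun k : ℤ => (k : ℝ))}
          = Set.univ ×ˢ (Set.range (fun k : ℤ => (k : ℝ)))ᶜ := by
        ext p; simp
      rw [heq, Measure.prod_prod]
      have hpre : (fun k : ℤ => (k : ℝ)) ⁻¹' (Set.range (fun k : ℤ => (k : ℝ)))ᶜ = ∅ := by
        ext k; simp
      have : ν (Set.range (fun k : ℤ => (k : ℝ)))ᶜ = 0 := by
        rw [hν, Measure.map_apply hcast hS.compl, hpre, measure_empty]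
      rw [this, mul_zero]
    have hae : (g ∘ fun p : ℝ × ℝ => p.1 + p.2) =ᵐ[(gaussianReal m v).prod ν]
        (g ∘ Prod.fst) := by
      have hmem : {p : ℝ × ℝ | p.2 ∈ Set.range (fun k : ℤ => (k : ℝ))}
          ∈ ae ((gaussianReal m v).prod ν) := by
        rw [mem_ae_iff, Set.compl_setOf]
        exact hnull
      filter_upwards [hmem] with p hp
      obtain ⟨k, hk⟩ := hp
      show g (p.1 + p.2) = g p.1
      simp only [hgdef]
      rw [← hk]
      exact gfrac_int_add p.1 k
    rw [Measure.map_congr hae, ← Measure.map_map hg measurable_fst, Measure.map_fst_prod]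
    simp
  rw [Measure.map_add _ _ hg, Measure.map_smul, Measure.map_smul, hkey, ← add_smul,
    ← ENNReal.ofReal_add (by linarith [ha.2]) ha.1]
  norm_num

lemma pi_eval_preimage {n : ℕ} (P : Fin n → Measure ℝ) [∀ i, IsProbabilityMeasure (P i)]
    (i : Fin n) (s : Set ℝ) (hs : MeasurableSet s) :
    Measure.pi P (Function.eval i ⁻¹' s) = P i s := by
  classical
  rw [Set.eval_preimage]
  rw [Measure.pi_pi]
  rw [Finset.prod_eq_single i]
  · simp
  · intro j _ hj
    rw [Function.update_of_ne hj]
    exact measure_univ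
  · simp

end Aux

/-- For `i = 1,…,n`, let `Q_i` be the law of `N_i + ε_i Y` where `N_i ~ N(m_i, σ_i²)` with
`|m_i| ≤ 1/3`, `ε_i` is Bernoulli(`α_i`) and `Y` is `ℤ`-valued (law the pushforward of
`νZ` under `Int.cast`), all independent, i.e. `Q_i = (1-α_i)•N(m_i,σ_i²) +
α_i•(N(m_i,σ_i²) ∗ νY)`.  Applying the rounding kernel `K(x,A) = 1_A(x - [x])`
coordinatewise,
`‖⊗ᵢ K(Q_i) - ⊗ᵢ N(m_i,σ_i²)‖_TV ≤ √(2 Σᵢ [(6/σ_i)φ(1/(6σ_i)) + 4Φ(-1/(6σ_i))])`. -/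
theorem tvDist_pi_rounding_kernel {n : ℕ} (m σ a : Fin n → ℝ) (hσ : ∀ i, 0 < σ i)
    (hm : ∀ i, |m i| ≤ 1 / 3) (ha : ∀ i, a i ∈ Set.Icc (0 : ℝ) 1)
    (νZ : Measure ℤ) [IsProbabilityMeasure νZ] :
    tvDist
      (Measure.pi fun i =>
        Measure.map (fun x : ℝ => x - (round x : ℝ))
          (ENNReal.ofReal (1 - a i) • gaussianReal (m i) ⟨(σ i) ^ 2, sq_nonneg _⟩ +
            ENNReal.ofReal (a i) •
              ((gaussianReal (m i) ⟨(σ i) ^ 2, sq_nonneg _⟩).conv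
                (Measure.map (fun k : ℤ => (k : ℝ)) νZ))))
      (Measure.pi fun i => gaussianReal (m i) ⟨(σ i) ^ 2, sq_nonneg _⟩) ≤
    Real.sqrt (2 * ∑ i,
      ((6 / σ i) * stdNormalPDF (1 / (6 * σ i)) + 4 * stdNormalCDF (-1 / (6 * σ i)))) := by
  classical
  set g : ℝ → ℝ := fun x => x - (round x : ℝ) with hgdef
  have hg : Measurable g := measurable_gfrac
  set P : Fin n → Measure ℝ := fun i => gaussianReal (m i) ⟨(σ i) ^ 2, sq_nonneg _⟩ with hP
  -- Step 1: per-coordinate the rounded measure equals the rounded gaussian.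
  have hpi1 : (fun i => Measure.map g
        (ENNReal.ofReal (1 - a i) • gaussianReal (m i) ⟨(σ i) ^ 2, sq_nonneg _⟩ +
          ENNReal.ofReal (a i) •
            ((gaussianReal (m i) ⟨(σ i) ^ 2, sq_nonneg _⟩).conv
              (Measure.map (fun k : ℤ => (k : ℝ)) νZ))))
      = fun i => Measure.map g (P i) :=
    funext fun i => map_gfrac_eq (m i) _ (a i) (ha i) νZ
  rw [hpi1]
  -- Step 2: the product of rounded gaussians is the coordinatewise image of the product.
  set G : (Fin n → ℝ) → (Fin n → ℝ) := fun x i => g (x i) with hGdef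
  have hG : Measurable G := measurable_pi_lambda _ fun i => hg.comp (measurable_pi_apply i)
  haveI hPprob : ∀ i, IsProbabilityMeasure (P i) := fun i => instIsProbabilityMeasureGaussianReal _ _
  haveI hprob : ∀ i, IsProbabilityMeasure (Measure.map g (P i)) :=
    fun i => Measure.isProbabilityMeasure_map hg.aemeasurable
  have hPi : (Measure.pi fun i => Measure.map g (P i)) = Measure.map G (Measure.pi P) :=
    ((measurePreserving_pi P (fun i => Measure.map g (P i))
      (fun i => ⟨hg, rfl⟩)).map_eq).symm
  rw [hPi]
  haveI : IsProbabilityMeasure (Measure.pi P) := Measure.pi.instIsProbabilityMeasure _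
  haveI : IsProbabilityMeasure (Measure.map G (Measure.pi P)) :=
    Measure.isProbabilityMeasure_map hG.aemeasurable
  -- Notation for the bad set.
  set B : Set ℝ := Set.Ico (-(1/2) : ℝ) (1/2) with hB
  set E : Set (Fin n → ℝ) := Set.univ.pi fun _ => B with hE
  have hBmeas : MeasurableSet B := measurableSet_Ico
  have hEmeas : MeasurableSet E := MeasurableSet.univ_pi fun _ => hBmeas
  have hGE : ∀ x ∈ E, G x = x := by
    intro x hx
    funext i
    have hxi : x i ∈ B := hx i (Set.mem_univ i)
    have : round (x i) = 0 := round_eq_zero_iff.mpr hxi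
    simp [hGdef, hgdef, this]
  -- Bound for the measure of the complement of E.
  set S : ℝ := ∑ i, 2 * stdNormalCDF (-1 / (6 * σ i)) with hS
  have hSnn : 0 ≤ S := Finset.sum_nonneg fun i _ =>
    mul_nonneg (by norm_num) (stdNormalCDF_nonneg _)
  have hEc : (Measure.pi P Eᶜ).toReal ≤ S := by
    have hEc_sub : Eᶜ ⊆ ⋃ i, Function.eval i ⁻¹' Bᶜ := by
      intro x hx
      simp only [hE, Set.mem_compl_iff, Set.mem_pi, Set.mem_univ, forall_true_left] at hx
      push_neg at hx
      obtain ⟨i, hi⟩ := hx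
      exact Set.mem_iUnion.mpr ⟨i, hi⟩
    have h1 : Measure.pi P Eᶜ ≤ ∑ i, P i Bᶜ := by
      refine (measure_mono hEc_sub).trans ?_
      refine (measure_iUnion_le _).trans ?_
      rw [tsum_fintype]
      exact Finset.sum_le_sum fun i _ =>
        le_of_eq (pi_eval_preimage P i Bᶜ hBmeas.compl)
    have h2 : (∑ i, P i Bᶜ) ≤ ENNReal.ofReal S := by
      rw [hS, ENNReal.ofReal_sum_of_nonneg
        (fun i _ => mul_nonneg (by norm_num) (stdNormalCDF_nonneg _))]
      exact Finset.sum_le_sum fun i _ => gauss_tail (m i) (σ i) (hσ i) (hm i)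
    exact ENNReal.toReal_le_of_le_ofReal hSnn (h1.trans h2)
  -- Per-set bound.
  have hkey : ∀ A : Set (Fin n → ℝ), MeasurableSet A →
      |(Measure.map G (Measure.pi P) A).toReal - (Measure.pi P A).toReal| ≤ min 1 S := by
    intro A hA
    have hmapA : Measure.map G (Measure.pi P) A = Measure.pi P (G ⁻¹' A) :=
      Measure.map_apply hG hA
    have hAE : G ⁻¹' A ∩ E = A ∩ E := by
      ext x
      constructor
      · rintro ⟨hx1, hx2⟩
        exact ⟨by rwa [← hGE x hx2], hx2⟩
      · rintro ⟨hx1, hx2⟩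
        exact ⟨by simpa [Set.mem_preimage, hGE x hx2] using hx1, hx2⟩
    have hineq : ∀ s t : Set (Fin n → ℝ), s ∩ E = t ∩ E →
        Measure.pi P s ≤ Measure.pi P t + Measure.pi P Eᶜ := by
      intro s t hst
      calc Measure.pi P s ≤ Measure.pi P ((s ∩ E) ∪ Eᶜ) := by
            refine measure_mono fun x hx => ?_
            by_cases hxE : x ∈ E
            · exact Or.inl ⟨hx, hxE⟩
            · exact Or.inr hxE
        _ ≤ Measure.pi P (s ∩ E) + Measure.pi P Eᶜ := measure_union_le _ _
        _ ≤ Measure.pi P t + Measure.pi P Eᶜ := by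
            rw [hst]
            exact add_le_add_left (measure_mono Set.inter_subset_left) _
    have hne1 : Measure.pi P (G ⁻¹' A) ≠ ⊤ := measure_ne_top _ _
    have hne2 : Measure.pi P A ≠ ⊤ := measure_ne_top _ _
    have hne3 : Measure.pi P Eᶜ ≠ ⊤ := measure_ne_top _ _
    have hr1 : (Measure.pi P (G ⁻¹' A)).toReal
        ≤ (Measure.pi P A).toReal + (Measure.pi P Eᶜ).toReal := by
      have := hineq (G ⁻¹' A) A hAE
      calc (Measure.pi P (G ⁻¹' A)).toReal
          ≤ (Measure.pi P A + Measure.pi P Eᶜ).toReal :=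
            ENNReal.toReal_mono (by finiteness) this
        _ = (Measure.pi P A).toReal + (Measure.pi P Eᶜ).toReal :=
            ENNReal.toReal_add hne2 hne3
    have hr2 : (Measure.pi P A).toReal
        ≤ (Measure.pi P (G ⁻¹' A)).toReal + (Measure.pi P Eᶜ).toReal := by
      have := hineq A (G ⁻¹' A) hAE.symm
      calc (Measure.pi P A).toReal
          ≤ (Measure.pi P (G ⁻¹' A) + Measure.pi P Eᶜ).toReal :=
            ENNReal.toReal_mono (by finiteness) this
        _ = (Measure.pi P (G ⁻¹' A)).toReal + (Measure.pi P Eᶜ).toReal :=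
            ENNReal.toReal_add hne1 hne3
    have habsS : |(Measure.map G (Measure.pi P) A).toReal - (Measure.pi P A).toReal| ≤ S := by
      rw [hmapA, abs_sub_le_iff]
      constructor <;> [linarith [hEc, hr1]; linarith [hEc, hr2]]
    have habs1 : |(Measure.map G (Measure.pi P) A).toReal - (Measure.pi P A).toReal| ≤ 1 := by
      rw [abs_sub_le_iff]
      have h1 := prob_le_one (μ := Measure.map G (Measure.pi P)) (s := A)
      have h2 := prob_le_one (μ := Measure.pi P) (s := A)
      have h1' : (Measure.map G (Measure.pi P) A).toReal ≤ 1 :=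
        ENNReal.toReal_le_of_le_ofReal one_pos.le (by simpa using h1)
      have h2' : (Measure.pi P A).toReal ≤ 1 :=
        ENNReal.toReal_le_of_le_ofReal one_pos.le (by simpa using h2)
      have h1nn : 0 ≤ (Measure.map G (Measure.pi P) A).toReal := ENNReal.toReal_nonneg
      have h2nn : 0 ≤ (Measure.pi P A).toReal := ENNReal.toReal_nonneg
      constructor <;> linarith
    exact le_min habs1 habsS
  -- Numeric endgame.
  set T : ℝ := ∑ i, ((6 / σ i) * stdNormalPDF (1 / (6 * σ i))
      + 4 * stdNormalCDF (-1 / (6 * σ i))) with hT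
  have hTS : 2 * S ≤ T := by
    rw [hS, hT, Finset.mul_sum]
    refine Finset.sum_le_sum fun i _ => ?_
    have h1 : 0 ≤ (6 / σ i) * stdNormalPDF (1 / (6 * σ i)) :=
      mul_nonneg (div_nonneg (by norm_num) (hσ i).le) (stdNormalPDF_nonneg _)
    linarith
  have hfinal : min 1 S ≤ Real.sqrt (2 * T) := by
    have hsqS : min 1 S ≤ Real.sqrt S := by
      rcases le_total S 1 with h | h
      · have hsq : Real.sqrt S ^ 2 = S := Real.sq_sqrt hSnn
        have hnn : 0 ≤ Real.sqrt S := Real.sqrt_nonneg S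
        have : S ≤ Real.sqrt S := by nlinarith [Real.sqrt_le_sqrt h, Real.sqrt_one]
        exact le_trans (min_le_right _ _) this
      · exact le_trans (min_le_left _ _) (Real.one_le_sqrt.mpr h)
    refine hsqS.trans (Real.sqrt_le_sqrt ?_)
    linarith
  refine Real.iSup_le (fun A => ?_) (Real.sqrt_nonneg _)
  exact le_trans (hkey A.1 A.2) hfinal
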